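/- Let R¹, R², Y be independent random variables with R¹ ~ InverseBeta(μ-λ, β), R² + 1 ~ InverseBeta(λ, β+μ-λ), Y ~ InverseBeta(μ, β), where μ > λ > 0 and β > 0. Then (Y + (Y-1)·R¹/R², Y·R²/R¹ + (Y-1)) has the same distribution as (R¹, R²). (Invariance of the inverse-beta model under T^{h,Y} with h(y) = y-1.) -/

import Mathlib

open MeasureTheory ProbabilityTheory

/-- The Gamma(a, b) distribution, with density `Γ(a)⁻¹ bᵃ x^{a-1} e^{-bx}` on `(0,∞)`. -/
noncomputable def gammaDist (a b : ℝ) : Measure ℝ :=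
  volume.withDensity fun x => ENNReal.ofReal
    (if 0 < x then (Real.Gamma a)⁻¹ * b ^ a * x ^ (a - 1) * Real.exp (-(b * x)) else 0)

/-- The Beta(a, b) distribution, with density
`(Γ(a+b)/(Γ(a)Γ(b))) x^{a-1} (1-x)^{b-1}` on `(0,1)`. -/
noncomputable def betaDist (a b : ℝ) : Measure ℝ :=
  volume.withDensity fun x => ENNReal.ofReal
    (if 0 < x ∧ x < 1 then
      (Real.Gamma (a + b) / (Real.Gamma a * Real.Gamma b)) * x ^ (a - 1) * (1 - x) ^ (b - 1)
    else 0)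

open Set
open scoped ENNReal

noncomputable section
namespace Stmt13

abbrev E3 := ℝ × ℝ × ℝ

def e3 : E3 ≃ₗ[ℝ] (Fin 3 → ℝ) where
  toFun v := ![v.1, v.2.1, v.2.2]
  invFun f := (f 0, f 1, f 2)
  map_add' v w := by funext i; fin_cases i <;> simp
  map_smul' c v := by funext i; fin_cases i <;> simp
  left_inv v := rfl
  right_inv f := by funext i; fin_cases i <;> simp

def B3 : Module.Basis (Fin 3) ℝ E3 := Module.Basis.ofEquivFun e3

lemma toLin_B3_apply (M : Matrix (Fin 3) (Fin 3) ℝ) (v : E3) :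
    Matrix.toLin B3 B3 M v =
      (M 0 0 * v.1 + M 0 1 * v.2.1 + M 0 2 * v.2.2,
       (M 1 0 * v.1 + M 1 1 * v.2.1 + M 1 2 * v.2.2,
        M 2 0 * v.1 + M 2 1 * v.2.1 + M 2 2 * v.2.2)) := by
  have he1 : ∀ w : E3, e3 w = ![w.1, w.2.1, w.2.2] := fun _ => rfl
  have he2 : ∀ f : Fin 3 → ℝ, e3.symm f = (f 0, f 1, f 2) := fun _ => rfl
  simp [Matrix.toLin_apply, Matrix.mulVec, dotProduct, B3, he1, he2,
    Fin.sum_univ_three, Module.Basis.coe_ofEquivFun]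

def Ee (p : E3) : ℝ := p.1 + p.2.1 - p.1 * p.2.1
def Dd (p : E3) : ℝ := Ee p - p.2.1 * p.2.2

def phi (p : E3) : E3 :=
  (p.1 * p.2.2 * (1 - p.2.1) / Dd p, (p.2.1 * p.2.2 / Ee p, Ee p))

def S3 : Set E3 := Ioo (0:ℝ) 1 ×ˢ Ioo (0:ℝ) 1 ×ˢ Ioo (0:ℝ) 1

lemma measurableSet_S3 : MeasurableSet S3 :=
  measurableSet_Ioo.prod (measurableSet_Ioo.prod measurableSet_Ioo)

lemma mem_S3 {p : E3} : p ∈ S3 ↔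
    (0 < p.1 ∧ p.1 < 1) ∧ (0 < p.2.1 ∧ p.2.1 < 1) ∧ (0 < p.2.2 ∧ p.2.2 < 1) := by
  simp [S3, Set.mem_prod, Set.mem_Ioo, and_assoc]

lemma Ee_pos {p : E3} (hp : p ∈ S3) : 0 < Ee p := by
  rw [mem_S3] at hp; unfold Ee; nlinarith [hp.1.1, hp.1.2, hp.2.1.1, hp.2.1.2]

lemma Ee_lt_one {p : E3} (hp : p ∈ S3) : Ee p < 1 := by
  rw [mem_S3] at hp; unfold Ee; nlinarith [hp.1.1, hp.1.2, hp.2.1.1, hp.2.1.2]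

lemma Dd_pos {p : E3} (hp : p ∈ S3) : 0 < Dd p := by
  rw [mem_S3] at hp; unfold Dd Ee
  nlinarith [hp.1.1, hp.1.2, hp.2.1.1, hp.2.1.2, hp.2.2.1, hp.2.2.2]

lemma Dd_lt_Ee {p : E3} (hp : p ∈ S3) : Dd p < Ee p := by
  rw [mem_S3] at hp; unfold Dd; nlinarith [hp.2.1.1, hp.2.2.1]

lemma phi_mem_S3 {p : E3} (hp : p ∈ S3) : phi p ∈ S3 := by
  have hD := Dd_pos hp
  have hE := Ee_pos hp
  have hE1 := Ee_lt_one hp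
  have hDE := Dd_lt_Ee hp
  have h := mem_S3.1 hp
  obtain ⟨⟨h11, h12⟩, ⟨h21, h22⟩, h31, h32⟩ := h
  rw [mem_S3]
  have hphi1 : (phi p).1 = p.1 * p.2.2 * (1 - p.2.1) / Dd p := rfl
  have hphi2 : (phi p).2.1 = p.2.1 * p.2.2 / Ee p := rfl
  have hphi3 : (phi p).2.2 = Ee p := rfl
  refine ⟨⟨?_, ?_⟩, ⟨?_, ?_⟩, hE, hE1⟩
  · rw [hphi1]
    apply div_pos ?_ hD
    have : (0:ℝ) < 1 - p.2.1 := by linarith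
    positivity
  · rw [hphi1, div_lt_one hD]
    unfold Dd Ee
    nlinarith [mul_pos (mul_pos h11 (by linarith : (0:ℝ) < 1 - p.2.1))
        (by linarith : (0:ℝ) < 1 - p.2.2),
      mul_pos h21 (by linarith : (0:ℝ) < 1 - p.2.2)]
  · rw [hphi2]; positivity
  · rw [hphi2, div_lt_one hE]
    have h : Dd p = Ee p - p.2.1 * p.2.2 := rfl
    linarith [hD, h ▸ hD]

lemma one_sub_phi1 {p : E3} (hp : p ∈ S3) :
    1 - (phi p).1 = (1 - p.2.2) * Ee p / Dd p := by
  have hD := (Dd_pos hp).ne'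
  unfold phi
  field_simp [phi]
  unfold Dd Ee; ring

lemma one_sub_phi2 {p : E3} (hp : p ∈ S3) :
    1 - (phi p).2.1 = Dd p / Ee p := by
  have hE := (Ee_pos hp).ne'
  unfold phi
  field_simp [phi]
  unfold Dd; ring

lemma Ee_phi {p : E3} (hp : p ∈ S3) : Ee (phi p) = p.2.2 := by
  have hD := (Dd_pos hp).ne'
  have hE := (Ee_pos hp).ne'
  unfold Ee phi
  simp only
  field_simp
  unfold Dd Ee; ring

lemma Dd_phi {p : E3} (hp : p ∈ S3) : Dd (phi p) = p.2.2 * (1 - p.2.1) := by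
  have hE := (Ee_pos hp).ne'
  unfold Dd
  rw [Ee_phi hp]
  have hphi2 : (phi p).2.1 = p.2.1 * p.2.2 / Ee p := rfl
  have hphi3 : (phi p).2.2 = Ee p := rfl
  rw [hphi2, hphi3]
  field_simp

lemma phi_invol {p : E3} (hp : p ∈ S3) : phi (phi p) = p := by
  have hD := (Dd_pos hp).ne'
  have hE := (Ee_pos hp).ne'
  have h21 : p.2.1 ≠ 0 := (mem_S3.1 hp).2.1.1.ne'
  have h31 : p.2.2 ≠ 0 := (mem_S3.1 hp).2.2.1.ne'
  have h22 : (1:ℝ) - p.2.1 ≠ 0 := by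
    have := (mem_S3.1 hp).2.1.2; linarith
  have e1 : phi (phi p) = ((phi p).1 * (phi p).2.2 * (1 - (phi p).2.1) / Dd (phi p),
      ((phi p).2.1 * (phi p).2.2 / Ee (phi p), Ee (phi p))) := rfl
  rw [e1, Ee_phi hp, Dd_phi hp, one_sub_phi2 hp]
  have hphi1 : (phi p).1 = p.1 * p.2.2 * (1 - p.2.1) / Dd p := rfl
  have hphi2 : (phi p).2.1 = p.2.1 * p.2.2 / Ee p := rfl
  have hphi3 : (phi p).2.2 = Ee p := rfl
  rw [hphi1, hphi2, hphi3]
  refine Prod.ext ?_ (Prod.ext ?_ rfl)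
  · simp only
    field_simp
  · simp only
    field_simp



section Deriv

def fst3 : E3 →L[ℝ] ℝ := ContinuousLinearMap.fst ℝ ℝ (ℝ × ℝ)
def snd13 : E3 →L[ℝ] ℝ :=
  (ContinuousLinearMap.fst ℝ ℝ ℝ).comp (ContinuousLinearMap.snd ℝ ℝ (ℝ × ℝ))
def snd23 : E3 →L[ℝ] ℝ :=
  (ContinuousLinearMap.snd ℝ ℝ ℝ).comp (ContinuousLinearMap.snd ℝ ℝ (ℝ × ℝ))

@[simp] lemma fst3_apply (v : E3) : fst3 v = v.1 := rfl
@[simp] lemma snd13_apply (v : E3) : snd13 v = v.2.1 := rfl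
@[simp] lemma snd23_apply (v : E3) : snd23 v = v.2.2 := rfl

lemma hasFDerivAt_x1 (p : E3) : HasFDerivAt (fun q : E3 => q.1) fst3 p := hasFDerivAt_fst
lemma hasFDerivAt_x2 (p : E3) : HasFDerivAt (fun q : E3 => q.2.1) snd13 p :=
  hasFDerivAt_fst.comp p hasFDerivAt_snd
lemma hasFDerivAt_x3 (p : E3) : HasFDerivAt (fun q : E3 => q.2.2) snd23 p :=
  hasFDerivAt_snd.comp p hasFDerivAt_snd

def N1 (p : E3) : ℝ := p.1 * p.2.2 * (1 - p.2.1)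

def LN1 (p : E3) : E3 →L[ℝ] ℝ :=
  (p.2.2 * (1 - p.2.1)) • fst3 + (-(p.1 * p.2.2)) • snd13 + (p.1 * (1 - p.2.1)) • snd23
def LD (p : E3) : E3 →L[ℝ] ℝ :=
  (1 - p.2.1) • fst3 + (1 - p.1 - p.2.2) • snd13 + (-p.2.1) • snd23
def LEe (p : E3) : E3 →L[ℝ] ℝ :=
  (1 - p.2.1) • fst3 + (1 - p.1) • snd13 + (0 : ℝ) • snd23
def LN2 (p : E3) : E3 →L[ℝ] ℝ :=
  (0 : ℝ) • fst3 + p.2.2 • snd13 + p.2.1 • snd23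

lemma hasFDerivAt_N1 (p : E3) : HasFDerivAt N1 (LN1 p) p := by
  have h := ((hasFDerivAt_x1 p).mul (hasFDerivAt_x3 p)).mul
    ((hasFDerivAt_const (1:ℝ) p).sub (hasFDerivAt_x2 p))
  refine h.congr_fderiv ?_
  refine ContinuousLinearMap.ext fun v => ?_
  simp [LN1]
  ring

lemma hasFDerivAt_Dd (p : E3) : HasFDerivAt Dd (LD p) p := by
  have h := ((((hasFDerivAt_x1 p).add (hasFDerivAt_x2 p)).sub
      ((hasFDerivAt_x1 p).mul (hasFDerivAt_x2 p))).sub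
      ((hasFDerivAt_x2 p).mul (hasFDerivAt_x3 p)))
  refine h.congr_fderiv ?_
  refine ContinuousLinearMap.ext fun v => ?_
  simp [LD]
  ring

lemma hasFDerivAt_Ee (p : E3) : HasFDerivAt Ee (LEe p) p := by
  have h := (((hasFDerivAt_x1 p).add (hasFDerivAt_x2 p)).sub
      ((hasFDerivAt_x1 p).mul (hasFDerivAt_x2 p)))
  refine h.congr_fderiv ?_
  refine ContinuousLinearMap.ext fun v => ?_
  simp [LEe]
  ring

lemma hasFDerivAt_N2 (p : E3) : HasFDerivAt (fun q : E3 => q.2.1 * q.2.2) (LN2 p) p := by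
  have h := (hasFDerivAt_x2 p).mul (hasFDerivAt_x3 p)
  refine h.congr_fderiv ?_
  refine ContinuousLinearMap.ext fun v => ?_
  simp [LN2]
  ring

def Mder (p : E3) : Matrix (Fin 3) (Fin 3) ℝ :=
  !![(Dd p * (p.2.2 * (1 - p.2.1)) - N1 p * (1 - p.2.1)) / Dd p ^ 2,
     (Dd p * (-(p.1 * p.2.2)) - N1 p * (1 - p.1 - p.2.2)) / Dd p ^ 2,
     (Dd p * (p.1 * (1 - p.2.1)) - N1 p * (-p.2.1)) / Dd p ^ 2;
     (Ee p * 0 - p.2.1 * p.2.2 * (1 - p.2.1)) / Ee p ^ 2,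
     (Ee p * p.2.2 - p.2.1 * p.2.2 * (1 - p.1)) / Ee p ^ 2,
     (Ee p * p.2.1 - p.2.1 * p.2.2 * 0) / Ee p ^ 2;
     1 - p.2.1, 1 - p.1, 0]

def phi' (p : E3) : E3 →L[ℝ] E3 :=
  LinearMap.toContinuousLinearMap (Matrix.toLin B3 B3 (Mder p))

lemma phi'_det {p : E3} (hD : Dd p ≠ 0) (hE : Ee p ≠ 0) :
    (phi' p).det = -(p.2.2 * (1 - p.2.1) / Dd p) := by
  have h1 : (phi' p).det = (Mder p).det := by
    have : ((phi' p : E3 →L[ℝ] E3) : E3 →ₗ[ℝ] E3) = Matrix.toLin B3 B3 (Mder p) :=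
      LinearMap.coe_toContinuousLinearMap _
    rw [ContinuousLinearMap.det, this]
    exact LinearMap.det_toLin B3 (Mder p)
  rw [h1, Matrix.det_fin_three]
  simp only [Mder, Matrix.cons_val', Matrix.cons_val_zero, Matrix.cons_val_one, Matrix.head_cons,
    Matrix.empty_val', Matrix.cons_val_fin_one, Matrix.of_apply, Matrix.head_fin_const, Matrix.cons_val_two,
    Matrix.tail_cons]
  unfold N1 Dd Ee at *
  field_simp
  ring

lemma hasFDerivAt_phi {p : E3} (hD : Dd p ≠ 0) (hE : Ee p ≠ 0) :
    HasFDerivAt phi (phi' p) p := by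
  have hinvD : HasFDerivAt (fun q : E3 => (Dd q)⁻¹) ((-(Dd p ^ 2)⁻¹) • LD p) p :=
    (hasDerivAt_inv hD).comp_hasFDerivAt p (hasFDerivAt_Dd p)
  have hinvE : HasFDerivAt (fun q : E3 => (Ee q)⁻¹) ((-(Ee p ^ 2)⁻¹) • LEe p) p :=
    (hasDerivAt_inv hE).comp_hasFDerivAt p (hasFDerivAt_Ee p)
  have h1 : HasFDerivAt (fun q : E3 => N1 q * (Dd q)⁻¹)
      (N1 p • ((-(Dd p ^ 2)⁻¹) • LD p) + (Dd p)⁻¹ • LN1 p) p :=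
    (hasFDerivAt_N1 p).mul hinvD
  have h2 : HasFDerivAt (fun q : E3 => (q.2.1 * q.2.2) * (Ee q)⁻¹)
      ((p.2.1 * p.2.2) • ((-(Ee p ^ 2)⁻¹) • LEe p) + (Ee p)⁻¹ • LN2 p) p :=
    (hasFDerivAt_N2 p).mul hinvE
  have h3 := hasFDerivAt_Ee p
  have hphi : phi = fun q : E3 =>
      (N1 q * (Dd q)⁻¹, ((q.2.1 * q.2.2) * (Ee q)⁻¹, Ee q)) := by
    funext q
    simp [phi, N1, div_eq_mul_inv]
  have htot := h1.prodMk (h2.prodMk h3)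
  rw [← hphi] at htot
  refine htot.congr_fderiv ?_
  refine ContinuousLinearMap.ext fun v => ?_
  have hL : phi' p v =
      (Mder p 0 0 * v.1 + Mder p 0 1 * v.2.1 + Mder p 0 2 * v.2.2,
       (Mder p 1 0 * v.1 + Mder p 1 1 * v.2.1 + Mder p 1 2 * v.2.2,
        Mder p 2 0 * v.1 + Mder p 2 1 * v.2.1 + Mder p 2 2 * v.2.2)) := by
    have : phi' p v = Matrix.toLin B3 B3 (Mder p) v := rfl
    rw [this, toLin_B3_apply]
  rw [hL]
  simp only [Mder, Matrix.cons_val', Matrix.cons_val_zero, Matrix.cons_val_one, Matrix.head_cons,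
    Matrix.empty_val', Matrix.cons_val_fin_one, Matrix.of_apply, Matrix.head_fin_const, Matrix.cons_val_two,
    Matrix.tail_cons, ContinuousLinearMap.prod_apply, ContinuousLinearMap.add_apply,
    ContinuousLinearMap.smul_apply, LN1, LD, LEe, LN2, fst3_apply, snd13_apply, snd23_apply,
    smul_eq_mul]
  refine Prod.ext ?_ (Prod.ext ?_ ?_) <;> simp only <;> (field_simp; try ring)

end Deriv

section MeasureStuff

instance : (volume : Measure E3).IsAddHaarMeasure :=
  Measure.prod.instIsAddHaarMeasure _ _

/-- generic: pushforward of a density measure under a measure-preserving-density involutive-ish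
map -/
lemma map_withDensity_self {f : E3 → E3} {f' : E3 → E3 →L[ℝ] E3} {s : Set E3}
    (hs : MeasurableSet s) (hf' : ∀ x ∈ s, HasFDerivWithinAt f (f' x) s x)
    (hinj : Set.InjOn f s) (himg : f '' s = s) (hfm : Measurable f)
    (ρ : E3 → ℝ≥0∞) (hρ : ∀ x ∈ s, ENNReal.ofReal |(f' x).det| * ρ (f x) = ρ x) :
    Measure.map f ((volume.restrict s).withDensity ρ)
      = (volume.restrict s).withDensity ρ := by
  refine Measure.ext fun A hA => ?_
  rw [Measure.map_apply hfm hA, withDensity_apply _ (hfm hA), withDensity_apply _ hA,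
    Measure.restrict_restrict (hfm hA), Measure.restrict_restrict hA]
  have hset : A ∩ s = f '' (s ∩ f ⁻¹' A) := by
    conv_lhs => rw [← himg]
    ext y
    constructor
    · rintro ⟨hyA, x, hxs, rfl⟩
      exact ⟨x, ⟨hxs, hyA⟩, rfl⟩
    · rintro ⟨x, ⟨hxs, hxA⟩, rfl⟩
      exact ⟨hxA, x, hxs, rfl⟩
  rw [hset,
    lintegral_image_eq_lintegral_abs_det_fderiv_mul volume (hs.inter (hfm hA))
      (fun x hx => (hf' x hx.1).mono Set.inter_subset_left)
      (hinj.mono Set.inter_subset_left) ρ]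
  rw [Set.inter_comm (f ⁻¹' A) s]
  exact setLIntegral_congr_fun (hs.inter (hfm hA))
    (fun x hx => (hρ x hx.1).symm)

lemma prod_withDensity {α β : Type*} [MeasurableSpace α] [MeasurableSpace β]
    (μ : Measure α) (ν : Measure β) [SigmaFinite μ] [SigmaFinite ν]
    {f : α → ℝ≥0∞} {g : β → ℝ≥0∞} (hf : AEMeasurable f μ) (hg : AEMeasurable g ν)
    [SigmaFinite (μ.withDensity f)] [SigmaFinite (ν.withDensity g)] :
    (μ.withDensity f).prod (ν.withDensity g)
      = (μ.prod ν).withDensity (fun p => f p.1 * g p.2) := by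
  refine Measure.prod_eq fun s t hs ht => ?_
  rw [withDensity_apply _ (hs.prod ht), ← Measure.prod_restrict,
    lintegral_prod_mul (hf.mono_measure Measure.restrict_le_self)
      (hg.mono_measure Measure.restrict_le_self),
    withDensity_apply _ hs, withDensity_apply _ ht]

end MeasureStuff
section Density

def dens (a b x : ℝ) : ℝ :=
  (Real.Gamma (a + b) / (Real.Gamma a * Real.Gamma b)) * x ^ (a - 1) * (1 - x) ^ (b - 1)

lemma dens_pos {a b x : ℝ} (ha : 0 < a) (hb : 0 < b) (hx : 0 < x) (hx1 : x < 1) :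
    0 < dens a b x := by
  have h1 := Real.Gamma_pos_of_pos ha
  have h2 := Real.Gamma_pos_of_pos hb
  have h3 := Real.Gamma_pos_of_pos (by linarith : (0:ℝ) < a + b)
  have h4 : (0:ℝ) < 1 - x := by linarith
  unfold dens
  positivity

lemma log_dens {a b x : ℝ} (ha : 0 < a) (hb : 0 < b) (hx : 0 < x) (hx1 : x < 1) :
    Real.log (dens a b x) = Real.log (Real.Gamma (a + b) / (Real.Gamma a * Real.Gamma b))
      + (a - 1) * Real.log x + (b - 1) * Real.log (1 - x) := by
  have h4 : (0:ℝ) < 1 - x := by linarith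
  have h1 := Real.Gamma_pos_of_pos ha
  have h2 := Real.Gamma_pos_of_pos hb
  have h3 := Real.Gamma_pos_of_pos (by linarith : (0:ℝ) < a + b)
  unfold dens
  rw [Real.log_mul (by positivity) (by positivity), Real.log_mul (by positivity) (by positivity),
    Real.log_rpow hx, Real.log_rpow h4]

def rho (m l b : ℝ) (p : E3) : ℝ≥0∞ :=
  ENNReal.ofReal (dens (m - l) b p.1) *
    (ENNReal.ofReal (dens l (b + m - l) p.2.1) * ENNReal.ofReal (dens m b p.2.2))

lemma rho_identity {m l b : ℝ} (hl : 0 < l) (hml : l < m) (hb : 0 < b)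
    {p : E3} (hp : p ∈ S3) :
    ENNReal.ofReal |(phi' p).det| * rho m l b (phi p) = rho m l b p := by
  obtain ⟨⟨h11, h12⟩, ⟨h21, h22⟩, h31, h32⟩ := mem_S3.1 hp
  have hD := Dd_pos hp
  have hE := Ee_pos hp
  have hE1 := Ee_lt_one hp
  have hq := phi_mem_S3 hp
  obtain ⟨⟨g11, g12⟩, ⟨g21, g22⟩, g31, g32⟩ := mem_S3.1 hq
  have h1x2 : (0:ℝ) < 1 - p.2.1 := by linarith
  have h1x1 : (0:ℝ) < 1 - p.1 := by linarith
  have h1x3 : (0:ℝ) < 1 - p.2.2 := by linarith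
  have habs : |(phi' p).det| = p.2.2 * (1 - p.2.1) / Dd p := by
    rw [phi'_det hD.ne' hE.ne', abs_neg, abs_of_pos (by positivity)]
  -- positivity of the densities
  have hd1φ := dens_pos (by linarith : (0:ℝ) < m - l) hb g11 g12
  have hd2φ := dens_pos hl (by linarith : (0:ℝ) < b + m - l) g21 g22
  have hd3φ := dens_pos (by linarith : (0:ℝ) < m) hb g31 g32
  have hd1 := dens_pos (by linarith : (0:ℝ) < m - l) hb h11 h12
  have hd2 := dens_pos hl (by linarith : (0:ℝ) < b + m - l) h21 h22
  have hd3 := dens_pos (by linarith : (0:ℝ) < m) hb h31 h32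
  rw [habs]
  unfold rho
  rw [← ENNReal.ofReal_mul (le_of_lt hd2φ), ← ENNReal.ofReal_mul (le_of_lt hd1φ),
    ← ENNReal.ofReal_mul (by positivity), ← ENNReal.ofReal_mul (le_of_lt hd2),
    ← ENNReal.ofReal_mul (le_of_lt hd1)]
  congr 1
  -- now a real identity; prove via logs
  have hLpos : (0:ℝ) < p.2.2 * (1 - p.2.1) / Dd p * (dens (m - l) b (phi p).1 *
      (dens l (b + m - l) (phi p).2.1 * dens m b (phi p).2.2)) := by positivity
  have hRpos : (0:ℝ) < dens (m - l) b p.1 * (dens l (b + m - l) p.2.1 * dens m b p.2.2) := by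
    positivity
  apply Real.log_injOn_pos (Set.mem_Ioi.2 hLpos) (Set.mem_Ioi.2 hRpos)
  -- expand the logs
  have e1 : (phi p).1 = p.1 * p.2.2 * (1 - p.2.1) / Dd p := rfl
  have e2 : (phi p).2.1 = p.2.1 * p.2.2 / Ee p := rfl
  have e3 : (phi p).2.2 = Ee p := rfl
  have l1 : Real.log (phi p).1
      = Real.log p.1 + Real.log p.2.2 + Real.log (1 - p.2.1) - Real.log (Dd p) := by
    rw [e1, Real.log_div (by positivity) hD.ne', Real.log_mul (by positivity) h1x2.ne',
      Real.log_mul h11.ne' h31.ne']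
  have l2 : Real.log (1 - (phi p).1)
      = Real.log (1 - p.2.2) + Real.log (Ee p) - Real.log (Dd p) := by
    rw [one_sub_phi1 hp, Real.log_div (by positivity) hD.ne',
      Real.log_mul h1x3.ne' hE.ne']
  have l3 : Real.log (phi p).2.1 = Real.log p.2.1 + Real.log p.2.2 - Real.log (Ee p) := by
    rw [e2, Real.log_div (by positivity) hE.ne', Real.log_mul h21.ne' h31.ne']
  have l4 : Real.log (1 - (phi p).2.1) = Real.log (Dd p) - Real.log (Ee p) := by
    rw [one_sub_phi2 hp, Real.log_div hD.ne' hE.ne']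
  have l5 : Real.log (phi p).2.2 = Real.log (Ee p) := by rw [e3]
  have l6 : Real.log (1 - (phi p).2.2) = Real.log (1 - p.1) + Real.log (1 - p.2.1) := by
    have : 1 - (phi p).2.2 = (1 - p.1) * (1 - p.2.1) := by
      rw [e3]; unfold Ee; ring
    rw [this, Real.log_mul h1x1.ne' h1x2.ne']
  have ha1 : (0:ℝ) < m - l := by linarith
  have ha2 : (0:ℝ) < b + m - l := by linarith
  have ha3 : (0:ℝ) < m := by linarith
  rw [Real.log_mul (by positivity) (by positivity), Real.log_mul (by positivity) (by positivity),
    Real.log_mul (by positivity) (by positivity), Real.log_mul (by positivity) (by positivity),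
    Real.log_mul (by positivity) (by positivity),
    Real.log_div (by positivity) hD.ne', Real.log_mul h31.ne' h1x2.ne',
    log_dens ha1 hb g11 g12, log_dens hl ha2 g21 g22, log_dens ha3 hb g31 g32,
    log_dens ha1 hb h11 h12, log_dens hl ha2 h21 h22, log_dens ha3 hb h31 h32,
    l1, l2, l3, l4, l5, l6]
  ring

end Density
section Assembly

lemma betaDist_eq (a b : ℝ) : betaDist a b
    = (volume.restrict (Ioo (0:ℝ) 1)).withDensity fun x => ENNReal.ofReal (dens a b x) := by
  unfold betaDist
  rw [← withDensity_indicator measurableSet_Ioo]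
  congr 1
  funext x
  by_cases h : x ∈ Ioo (0:ℝ) 1
  · rw [Set.indicator_of_mem h, if_pos ⟨h.1, h.2⟩]
    rfl
  · rw [Set.indicator_of_notMem h, if_neg (by simpa [Set.mem_Ioo] using h)]
    simp

lemma dens_meas (a b : ℝ) : Measurable fun x : ℝ => ENNReal.ofReal (dens a b x) := by
  unfold dens
  fun_prop

lemma measurable_phi : Measurable phi := by
  unfold phi Dd Ee
  fun_prop

def Gmap (p : E3) : ℝ × ℝ :=
  (p.2.2⁻¹ + (p.2.2⁻¹ - 1) * p.1⁻¹ / (p.2.1⁻¹ - 1),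
   p.2.2⁻¹ * (p.2.1⁻¹ - 1) / p.1⁻¹ + (p.2.2⁻¹ - 1))

def G0map (p : E3) : ℝ × ℝ := (p.1⁻¹, p.2.1⁻¹ - 1)

lemma measurable_Gmap : Measurable Gmap := by unfold Gmap; fun_prop
lemma measurable_G0map : Measurable G0map := by unfold G0map; fun_prop

lemma Gmap_eq_G0map_phi {p : E3} (hp : p ∈ S3) : Gmap p = G0map (phi p) := by
  obtain ⟨⟨h11, h12⟩, ⟨h21, h22⟩, h31, h32⟩ := mem_S3.1 hp
  have hD := (Dd_pos hp).ne'
  have hE := (Ee_pos hp).ne'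
  have h1x2 : (1:ℝ) - p.2.1 ≠ 0 := by intro h; linarith [h22]
  have hx2inv : p.2.1⁻¹ - 1 ≠ 0 := by
    rw [sub_ne_zero]
    intro h
    rw [inv_eq_one] at h
    · linarith [h22, h ▸ h22]
  have e1 : (phi p).1 = p.1 * p.2.2 * (1 - p.2.1) / Dd p := rfl
  have e2 : (phi p).2.1 = p.2.1 * p.2.2 / Ee p := rfl
  have hsub2 : p.2.1⁻¹ - 1 = (1 - p.2.1) / p.2.1 := by field_simp
  have hsub3 : p.2.2⁻¹ - 1 = (1 - p.2.2) / p.2.2 := by field_simp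
  have hDval : Dd p = p.1 + p.2.1 - p.1 * p.2.1 - p.2.1 * p.2.2 := by unfold Dd Ee; ring
  have hEval : Ee p = p.1 + p.2.1 - p.1 * p.2.1 := rfl
  have hD' : p.1 + p.2.1 - p.1 * p.2.1 - p.2.1 * p.2.2 ≠ 0 := hDval ▸ hD
  have hE' : p.1 + p.2.1 - p.1 * p.2.1 ≠ 0 := hEval ▸ hE
  unfold Gmap G0map
  refine Prod.ext ?_ ?_
  · simp only [e1]
    rw [hsub2, hsub3, hDval]
    field_simp
    ring
  · simp only [e2]
    rw [hsub2, hsub3, hEval]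
    field_simp
    ring

end Assembly
lemma map_phi_eq {m l b : ℝ} (hl : 0 < l) (hml : l < m) (hb : 0 < b) :
    Measure.map phi ((volume.restrict S3).withDensity (rho m l b))
      = (volume.restrict S3).withDensity (rho m l b) :=
  map_withDensity_self measurableSet_S3
    (fun x hx => (hasFDerivAt_phi (Dd_pos hx).ne' (Ee_pos hx).ne').hasFDerivWithinAt)
    (fun x hx y hy hxy => by rw [← phi_invol hx, ← phi_invol hy, hxy])
    (Subset.antisymm (by rintro y ⟨x, hx, rfl⟩; exact phi_mem_S3 hx)
      (fun x hx => ⟨phi x, phi_mem_S3 hx, phi_invol hx⟩))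
    measurable_phi _ (fun x hx => rho_identity hl hml hb hx)

end Stmt13

open Stmt13 in
/-- invariance of the inverse-beta model. If `R¹, R², Y` are
independent with `R¹ ~ Be⁻¹(μ-λ,β)`, `R²+1 ~ Be⁻¹(λ,β+μ-λ)`, `Y ~ Be⁻¹(μ,β)`
(`μ > λ > 0`, `β > 0`), then `(Y + (Y-1)·R¹/R², Y·R²/R¹ + (Y-1)) =ᵈ (R¹, R²)`. -/
theorem stmt_13 {Ω : Type*} [MeasurableSpace Ω] (μ : Measure Ω) [IsProbabilityMeasure μ]
    (R1 R2 Y : Ω → ℝ) (hR1 : Measurable R1) (hR2 : Measurable R2) (hY : Measurable Y)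
    (hind : iIndepFun ![R1, R2, Y] μ)
    (m l b : ℝ) (hl : 0 < l) (hml : l < m) (hb : 0 < b)
    (hR1d : μ.map (fun ω => (R1 ω)⁻¹) = betaDist (m - l) b)
    (hR2d : μ.map (fun ω => (R2 ω + 1)⁻¹) = betaDist l (b + m - l))
    (hYd : μ.map (fun ω => (Y ω)⁻¹) = betaDist m b) :
    μ.map (fun ω => (Y ω + (Y ω - 1) * R1 ω / R2 ω, Y ω * R2 ω / R1 ω + (Y ω - 1)))
      = μ.map (fun ω => (R1 ω, R2 ω)) := by
  classical
  have hmv : ∀ i, Measurable (![R1, R2, Y] i) := by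
    intro i; fin_cases i <;> simpa
  have hX1 : Measurable (fun ω => (R1 ω)⁻¹) := hR1.inv
  have hX2 : Measurable (fun ω => (R2 ω + 1)⁻¹) := (hR2.add_const 1).inv
  have hX3 : Measurable (fun ω => (Y ω)⁻¹) := hY.inv
  -- independence
  have i23 : IndepFun R2 Y μ := by
    have h := hind.indepFun (show (1 : Fin 3) ≠ 2 by decide)
    simpa using h
  have i1 : IndepFun R1 (fun ω => (R2 ω, Y ω)) μ := by
    have h := (hind.indepFun_prodMk hmv 1 2 0 (by decide) (by decide)).symm
    simpa using h
  have i23' : IndepFun (fun ω => (R2 ω + 1)⁻¹) (fun ω => (Y ω)⁻¹) μ :=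
    i23.comp (show Measurable fun x : ℝ => (x + 1)⁻¹ by fun_prop) measurable_inv
  have i1' : IndepFun (fun ω => (R1 ω)⁻¹) (fun ω => ((R2 ω + 1)⁻¹, (Y ω)⁻¹)) μ :=
    i1.comp measurable_inv (show Measurable fun q : ℝ × ℝ => ((q.1 + 1)⁻¹, q.2⁻¹) by fun_prop)
  -- probability instances
  haveI hP1 : IsProbabilityMeasure (betaDist (m - l) b) :=
    hR1d ▸ Measure.isProbabilityMeasure_map hX1.aemeasurable
  haveI hP2 : IsProbabilityMeasure (betaDist l (b + m - l)) :=
    hR2d ▸ Measure.isProbabilityMeasure_map hX2.aemeasurable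
  haveI hP3 : IsProbabilityMeasure (betaDist m b) :=
    hYd ▸ Measure.isProbabilityMeasure_map hX3.aemeasurable
  haveI hQ1 : IsProbabilityMeasure ((volume.restrict (Ioo (0:ℝ) 1)).withDensity
      fun x => ENNReal.ofReal (dens (m - l) b x)) := betaDist_eq (m - l) b ▸ hP1
  haveI hQ2 : IsProbabilityMeasure ((volume.restrict (Ioo (0:ℝ) 1)).withDensity
      fun x => ENNReal.ofReal (dens l (b + m - l) x)) := betaDist_eq l (b + m - l) ▸ hP2
  haveI hQ3 : IsProbabilityMeasure ((volume.restrict (Ioo (0:ℝ) 1)).withDensity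
      fun x => ENNReal.ofReal (dens m b x)) := betaDist_eq m b ▸ hP3
  -- joint law
  have law23 : μ.map (fun ω => ((R2 ω + 1)⁻¹, (Y ω)⁻¹))
      = (betaDist l (b + m - l)).prod (betaDist m b) := by
    rw [(indepFun_iff_map_prod_eq_prod_map_map hX2.aemeasurable hX3.aemeasurable).1 i23',
      hR2d, hYd]
  have lawT : μ.map (fun ω => ((R1 ω)⁻¹, ((R2 ω + 1)⁻¹, (Y ω)⁻¹)))
      = (betaDist (m - l) b).prod ((betaDist l (b + m - l)).prod (betaDist m b)) := by
    rw [(indepFun_iff_map_prod_eq_prod_map_map hX1.aemeasurable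
      (hX2.prodMk hX3).aemeasurable).1 i1', hR1d, law23]
  -- density form of the product measure
  have e23 : (betaDist l (b + m - l)).prod (betaDist m b)
      = ((volume.restrict (Ioo (0:ℝ) 1)).prod (volume.restrict (Ioo (0:ℝ) 1))).withDensity
          (fun q : ℝ × ℝ => ENNReal.ofReal (dens l (b + m - l) q.1)
            * ENNReal.ofReal (dens m b q.2)) := by
    rw [betaDist_eq l (b + m - l), betaDist_eq m b]
    exact prod_withDensity _ _ (dens_meas _ _).aemeasurable (dens_meas _ _).aemeasurable
  haveI hQ23 : IsProbabilityMeasure (((volume.restrict (Ioo (0:ℝ) 1)).prod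
      (volume.restrict (Ioo (0:ℝ) 1))).withDensity
        (fun q : ℝ × ℝ => ENNReal.ofReal (dens l (b + m - l) q.1)
          * ENNReal.ofReal (dens m b q.2))) := by
    rw [← e23]; infer_instance
  have e123 : (betaDist (m - l) b).prod ((betaDist l (b + m - l)).prod (betaDist m b))
      = (volume.restrict S3).withDensity (rho m l b) := by
    rw [betaDist_eq (m - l) b, e23]
    rw [prod_withDensity _ _ (dens_meas _ _).aemeasurable
      (show Measurable (fun q : ℝ × ℝ => ENNReal.ofReal (dens l (b + m - l) q.1)
          * ENNReal.ofReal (dens m b q.2)) from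
        ((dens_meas l (b + m - l)).comp measurable_fst).mul
          ((dens_meas m b).comp measurable_snd)).aemeasurable]
    rw [Measure.prod_restrict, Measure.prod_restrict]
    have hvol : (volume : Measure E3) = (volume : Measure ℝ).prod
        ((volume : Measure ℝ).prod (volume : Measure ℝ)) := by
      rw [Measure.volume_eq_prod, Measure.volume_eq_prod]
    rw [← hvol]
    rfl
  -- function rewrites
  have hTmeas : Measurable (fun ω => ((R1 ω)⁻¹, ((R2 ω + 1)⁻¹, (Y ω)⁻¹))) :=
    hX1.prodMk (hX2.prodMk hX3)
  have keyL : (fun ω => (Y ω + (Y ω - 1) * R1 ω / R2 ω, Y ω * R2 ω / R1 ω + (Y ω - 1)))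
      = Gmap ∘ (fun ω => ((R1 ω)⁻¹, ((R2 ω + 1)⁻¹, (Y ω)⁻¹))) := by
    funext ω
    simp [Gmap, Function.comp, inv_inv, add_sub_cancel_right]
  have keyR : (fun ω => (R1 ω, R2 ω))
      = G0map ∘ (fun ω => ((R1 ω)⁻¹, ((R2 ω + 1)⁻¹, (Y ω)⁻¹))) := by
    funext ω
    simp [G0map, Function.comp, inv_inv, add_sub_cancel_right]
  rw [keyL, keyR, ← Measure.map_map measurable_Gmap hTmeas,
    ← Measure.map_map measurable_G0map hTmeas, lawT, e123]
  -- a.e. equality with G0map ∘ phi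
  have hae : ∀ᵐ p ∂((volume.restrict S3).withDensity (rho m l b)), p ∈ S3 := by
    rw [ae_iff]
    have hset : {a : E3 | ¬ a ∈ S3} = S3ᶜ := rfl
    rw [hset, withDensity_apply _ measurableSet_S3.compl,
      Measure.restrict_restrict measurableSet_S3.compl, compl_inter_self,
      Measure.restrict_empty, lintegral_zero_measure]
  have hcongr : Measure.map Gmap ((volume.restrict S3).withDensity (rho m l b))
      = Measure.map (G0map ∘ phi) ((volume.restrict S3).withDensity (rho m l b)) :=
    Measure.map_congr (hae.mono fun p hp => Gmap_eq_G0map_phi hp)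
  rw [hcongr, ← Measure.map_map measurable_G0map measurable_phi, map_phi_eq hl hml hb]
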